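/- Let ϑₙ = π(1 − 2⁻ⁿ), ζₙ = e^{iϑₙ}, and uₙ(z) = Re((ζₙ + z)/(ζₙ − z)) for n ≥ 1. The linear map from ℓ¹ to the space of real-valued functions on 𝔻 sending γ = (γₙ) to u = Σₙ γₙ uₙ is injective; in particular, the functions u₁, u₂, u₃, … are linearly independent over ℝ. -/

import Mathlib

open Complex MeasureTheory Filter Set

noncomputable section

def unitDisk : Set ℂ := {z : ℂ | ‖z‖ < 1}

/-- `ϑₙ = π(1 - 2⁻⁽ⁿ⁺¹⁾)` (indexing from `n = 0`, so this is the paper's `ϑ_{n+1}`). -/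
def theta (n : ℕ) : ℝ := Real.pi * (1 - (1 / 2 : ℝ) ^ (n + 1))

def zeta (n : ℕ) : ℂ := Complex.exp (theta n * Complex.I)

def uP (n : ℕ) (z : ℂ) : ℝ := ((zeta n + z) / (zeta n - z)).re

lemma normSq_zeta (n : ℕ) : Complex.normSq (zeta n) = 1 := by
  rw [Complex.normSq_eq_norm_sq, zeta]
  rw [Complex.norm_exp_ofReal_mul_I]
  norm_num

lemma uP_eq (n : ℕ) (z : ℂ) :
    uP n z = (1 - Complex.normSq z) / Complex.normSq (zeta n - z) := by
  have h := normSq_zeta n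
  rw [uP, Complex.div_re]
  rw [← add_div]
  congr 1
  · simp only [Complex.add_re, Complex.sub_re, Complex.add_im, Complex.sub_im,
      Complex.normSq_apply] at *
    ring_nf
    nlinarith [h]

lemma uP_nonneg (n : ℕ) (z : ℂ) (hz : ‖z‖ < 1) : 0 ≤ uP n z := by
  rw [uP_eq]
  apply div_nonneg
  · nlinarith [Complex.normSq_eq_norm_sq z, norm_nonneg z]
  · exact Complex.normSq_nonneg _

lemma uP_le (n : ℕ) (z : ℂ) (hz : ‖z‖ < 1) :
    uP n z ≤ (1 - Complex.normSq z) / (1 - ‖z‖) ^ 2 := by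
  rw [uP_eq]
  have habs : ‖zeta n‖ = 1 := by
    rw [zeta, Complex.norm_exp_ofReal_mul_I]
  have h1 : 1 - ‖z‖ ≤ ‖zeta n - z‖ := by
    have := norm_sub_norm_le (zeta n) z
    simp only [habs] at this
    linarith
  have h2 : (1 - ‖z‖) ^ 2 ≤ Complex.normSq (zeta n - z) := by
    rw [Complex.normSq_eq_norm_sq]
    have h0 : 0 ≤ 1 - ‖z‖ := by linarith
    nlinarith
  have hnum : 0 ≤ 1 - Complex.normSq z := by
    nlinarith [Complex.normSq_eq_norm_sq z, norm_nonneg z]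
  have hpos : 0 < (1 - ‖z‖) ^ 2 := by nlinarith
  exact div_le_div_of_nonneg_left hnum hpos h2

lemma summable_aux (δ : ℕ → ℝ) (hδ : Summable fun m => |δ m|) (z : ℂ)
    (hz : ‖z‖ < 1) : Summable fun m => δ m * uP m z := by
  apply Summable.of_abs
  apply Summable.of_nonneg_of_le (fun m => abs_nonneg _)
    (fun m => ?_) (hδ.mul_right ((1 - Complex.normSq z) / (1 - ‖z‖) ^ 2))
  rw [abs_mul, _root_.abs_of_nonneg (uP_nonneg m z hz)]
  exact mul_le_mul_of_nonneg_left (uP_le m z hz) (abs_nonneg _)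

lemma theta_mem (n : ℕ) : Real.pi / 2 ≤ theta n ∧ theta n < Real.pi := by
  have hpi := Real.pi_pos
  have h1 : (1/2:ℝ)^(n+1) ≤ (1/2:ℝ)^1 :=
    pow_le_pow_of_le_one (by norm_num) (by norm_num) (by omega)
  norm_num at h1
  have h2 : (0:ℝ) < (1/2:ℝ)^(n+1) := by positivity
  unfold theta
  constructor <;> nlinarith

lemma normSq_sub_smul (m n : ℕ) (r : ℝ) :
    Complex.normSq (zeta m - (r : ℂ) * zeta n)
      = 1 + r ^ 2 - 2 * r * Real.cos (theta m - theta n) := by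
  rw [Complex.normSq_apply]
  simp only [Complex.sub_re, Complex.sub_im, Complex.mul_re, Complex.mul_im,
    Complex.ofReal_re, Complex.ofReal_im, zeta, Complex.exp_ofReal_mul_I_re,
    Complex.exp_ofReal_mul_I_im, Real.cos_sub]
  have hm := Real.sin_sq_add_cos_sq (theta m)
  have hn := Real.sin_sq_add_cos_sq (theta n)
  ring_nf
  nlinarith [hm, hn]

/-- The separation constant. -/
def sep (n : ℕ) : ℝ := 1 - Real.cos (Real.pi * (1 / 2) ^ (n + 2))

lemma sep_pos (n : ℕ) : 0 < sep n := by
  have hpi := Real.pi_pos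
  have h2 : (0:ℝ) < (1/2:ℝ)^(n+2) := by positivity
  have h1 : (1/2:ℝ)^(n+2) ≤ (1/2:ℝ)^1 :=
    pow_le_pow_of_le_one (by norm_num) (by norm_num) (by omega)
  norm_num at h1
  have : Real.cos (Real.pi * (1/2)^(n+2)) < Real.cos 0 := by
    apply Real.cos_lt_cos_of_nonneg_of_le_pi le_rfl
    · nlinarith
    · positivity
  rw [Real.cos_zero] at this
  unfold sep; linarith

lemma cos_theta_sub_le {m n : ℕ} (h : m ≠ n) :
    Real.cos (theta m - theta n) ≤ 1 - sep n := by
  have hpi := Real.pi_pos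
  have key : Real.pi * (1/2)^(n+2) ≤ |theta m - theta n| ∧ |theta m - theta n| ≤ Real.pi := by
    have hm1 := theta_mem m
    have hn1 := theta_mem n
    constructor
    · unfold theta
      rcases lt_or_gt_of_ne h with hmn | hmn
      · -- m < n : theta m < theta n
        rw [abs_sub_comm, _root_.abs_of_nonneg]
        · have : (1/2:ℝ)^(m+1) ≥ (1/2:ℝ)^n := by
            apply pow_le_pow_of_le_one (by norm_num) (by norm_num) (by omega)
          have h2 : (1/2:ℝ)^(n+1) = (1/2:ℝ)^n * (1/2) := by ring
          have h3 : (1/2:ℝ)^(n+2) = (1/2:ℝ)^n * (1/4) := by ring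
          have h4 : (0:ℝ) < (1/2:ℝ)^n := by positivity
          nlinarith
        · have : (1/2:ℝ)^(n+1) ≤ (1/2:ℝ)^(m+1) :=
            pow_le_pow_of_le_one (by norm_num) (by norm_num) (by omega)
          nlinarith
      · -- m > n : theta m > theta n
        rw [_root_.abs_of_nonneg]
        · have : (1/2:ℝ)^(m+1) ≤ (1/2:ℝ)^(n+2) :=
            pow_le_pow_of_le_one (by norm_num) (by norm_num) (by omega)
          have h4 : (0:ℝ) < (1/2:ℝ)^(n+2) := by positivity
          have h5 : (1/2:ℝ)^(n+1) = 2*(1/2:ℝ)^(n+2) := by ring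
          nlinarith
        · have : (1/2:ℝ)^(m+1) ≤ (1/2:ℝ)^(n+1) :=
            pow_le_pow_of_le_one (by norm_num) (by norm_num) (by omega)
          nlinarith
    · rw [abs_sub_le_iff]
      constructor <;> nlinarith [hm1.1, hm1.2, hn1.1, hn1.2]
  rw [← Real.cos_abs]
  have := Real.cos_le_cos_of_nonneg_of_le_pi (by positivity) key.2 key.1
  unfold sep; linarith

lemma normSq_lower {m n : ℕ} (h : m ≠ n) {r : ℝ} (hr : 1/2 ≤ r) (hr1 : r ≤ 1) :
    sep n ≤ Complex.normSq (zeta m - (r : ℂ) * zeta n) := by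
  rw [normSq_sub_smul]
  have h1 := cos_theta_sub_le h
  have h2 := sep_pos n
  nlinarith

lemma kernel_zero (δ : ℕ → ℝ) (hδ : Summable fun m => |δ m|)
    (h0 : ∀ z ∈ unitDisk, ∑' m, δ m * uP m z = 0) (n : ℕ) : δ n = 0 := by
  set C := ∑' m, |δ m| with hC
  have hC0 : 0 ≤ C := tsum_nonneg fun m => abs_nonneg _
  have hsep := sep_pos n
  have habsz : ‖zeta n‖ = 1 := by
    rw [zeta, Complex.norm_exp_ofReal_mul_I]
  have key : ∀ t : ℝ, 0 < t → t ≤ 1/2 → |δ n| ≤ (C / sep n) * t ^ 2 := by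
    intro t ht ht2
    set r : ℝ := 1 - t with hrdef
    have hr12 : 1/2 ≤ r := by simp [hrdef]; linarith
    have hr1 : r < 1 := by simp [hrdef]; linarith
    set z : ℂ := (r : ℂ) * zeta n with hzdef
    have habs : ‖z‖ = r := by
      rw [hzdef, norm_mul, habsz, Complex.norm_real, Real.norm_eq_abs, _root_.abs_of_nonneg (by linarith)]
      ring
    have hz : z ∈ unitDisk := by rw [unitDisk, Set.mem_setOf_eq, habs]; exact hr1
    have hzlt : ‖z‖ < 1 := hz
    have hnsqz : Complex.normSq z = r ^ 2 := by
      rw [Complex.normSq_eq_norm_sq, habs]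
    have hsum := summable_aux δ hδ z hzlt
    have hsplit := Summable.tsum_eq_add_tsum_ite hsum n
    rw [h0 z hz] at hsplit
    -- value of uP n z
    have hun : uP n z = (1 - r ^ 2) / (1 - r) ^ 2 := by
      rw [uP_eq, hnsqz]
      congr 1
      have : zeta n - z = ((1 - r : ℝ) : ℂ) * zeta n := by
        rw [hzdef]; push_cast; ring
      rw [this, Complex.normSq_mul, normSq_zeta, Complex.normSq_ofReal]
      ring
    -- bound the tail
    have htail_le : ∀ m : ℕ, |if m = n then 0 else δ m * uP m z|
        ≤ |δ m| * ((1 - r ^ 2) / sep n) := by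
      intro m
      by_cases hmn : m = n
      · simp only [if_pos hmn, abs_zero]
        exact mul_nonneg (abs_nonneg _) (div_nonneg (by nlinarith) hsep.le)
      · rw [if_neg hmn, abs_mul, _root_.abs_of_nonneg (uP_nonneg m z hzlt)]
        apply mul_le_mul_of_nonneg_left _ (abs_nonneg _)
        rw [uP_eq, hnsqz]
        apply div_le_div_of_nonneg_left (by nlinarith) hsep
        exact hzdef ▸ normSq_lower hmn hr12 (by linarith)
    have htsum_bound : |δ n| * uP n z ≤ C * ((1 - r ^ 2) / sep n) := by
      have h1 : δ n * uP n z = -∑' m, if m = n then 0 else δ m * uP m z := by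
        linarith [hsplit]
      have hs : Summable fun m => |if m = n then 0 else δ m * uP m z| :=
        Summable.of_nonneg_of_le (fun m => abs_nonneg _) htail_le (hδ.mul_right _)
      have hs2 : Summable fun m => ‖if m = n then 0 else δ m * uP m z‖ := by
        simpa [Real.norm_eq_abs] using hs
      have h22 := norm_tsum_le_tsum_norm
        (f := fun m => if m = n then 0 else δ m * uP m z) hs2
      have h2 : |δ n * uP n z| ≤ ∑' m, |if m = n then 0 else δ m * uP m z| := by
        rw [h1, abs_neg]
        simpa [Real.norm_eq_abs] using h22
      have h3 : (∑' m, |if m = n then 0 else δ m * uP m z|)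
          ≤ ∑' m, |δ m| * ((1 - r ^ 2) / sep n) :=
        Summable.tsum_le_tsum htail_le hs (hδ.mul_right _)
      rw [abs_mul, _root_.abs_of_nonneg (uP_nonneg n z hzlt)] at h2
      rw [tsum_mul_right] at h3
      exact h2.trans (h3.trans_eq rfl)
    rw [hun] at htsum_bound
    -- convert to the final bound
    have ht' : 1 - r = t := by rw [hrdef]; ring
    have h1r2 : 1 - r ^ 2 = t * (2 - t) := by rw [hrdef]; ring
    rw [h1r2, ht'] at htsum_bound
    have h2t : 0 < 2 - t := by linarith
    have ht0 : t ≠ 0 := ne_of_gt ht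
    have hs0 : sep n ≠ 0 := ne_of_gt hsep
    have h := mul_le_mul_of_nonneg_right htsum_bound
      (show (0:ℝ) ≤ t ^ 2 * sep n by positivity)
    have e1 : |δ n| * (t * (2 - t) / t ^ 2) * (t ^ 2 * sep n)
        = |δ n| * (t * (2 - t)) * sep n := by field_simp
    have e2 : C * (t * (2 - t) / sep n) * (t ^ 2 * sep n)
        = C * (t * (2 - t)) * t ^ 2 := by field_simp
    rw [e1, e2] at h
    rw [div_mul_eq_mul_div, le_div_iff₀ hsep]
    nlinarith [h, mul_pos ht h2t, abs_nonneg (δ n)]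
  have h2 : Tendsto (fun k : ℕ => (1/2:ℝ) ^ (k + 1)) atTop (nhds 0) :=
    (tendsto_pow_atTop_nhds_zero_of_lt_one (by norm_num) (by norm_num)).comp
      (tendsto_add_atTop_nat 1)
  have hlim : Tendsto (fun k : ℕ => (C / sep n) * ((1/2:ℝ) ^ (k + 1)) ^ 2)
      atTop (nhds 0) := by
    have := (h2.mul h2).const_mul (C / sep n)
    simpa [pow_two] using this
  have hle : |δ n| ≤ 0 := by
    apply ge_of_tendsto' hlim
    intro k
    apply key
    · positivity
    · calc (1/2:ℝ) ^ (k + 1) ≤ (1/2:ℝ) ^ 1 :=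
          pow_le_pow_of_le_one (by norm_num) (by norm_num) (by omega)
        _ = 1/2 := pow_one _
  exact abs_eq_zero.mp (le_antisymm hle (abs_nonneg _))

lemma lp_summable_abs (γ : lp (fun _ : ℕ => ℝ) 1) : Summable fun m => |γ m| := by
  have h1 : (0:ℝ) < ENNReal.toReal 1 := by norm_num
  have := (lp.memℓp γ).summable h1
  simpa [ENNReal.toReal_one, Real.norm_eq_abs] using this


/-- The linear map `ℓ¹ → (𝔻 → ℝ)`, `γ ↦ Σ γₙ uₙ`, is injective; in particular the
functions `u₁, u₂, u₃, …` are linearly independent over `ℝ` (as functions on `𝔻`). -/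
theorem coefficient_map_injective :
    Function.Injective (fun γ : lp (fun _ : ℕ => ℝ) 1 =>
      unitDisk.restrict fun z : ℂ => ∑' n : ℕ, γ n * uP n z) ∧
    LinearIndependent ℝ (fun n : ℕ => unitDisk.restrict (uP n)) := by
  constructor
  · intro γ γ' hγ
    simp only at hγ
    have hδ : Summable fun m => |γ m - γ' m| := by
      have := lp_summable_abs (γ - γ')
      simpa [lp.coeFn_sub, Pi.sub_apply] using this
    have h0 : ∀ z ∈ unitDisk, ∑' m, (γ m - γ' m) * uP m z = 0 := by
      intro z hz
      have h1 := congrFun hγ ⟨z, hz⟩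
      change ∑' m, γ m * uP m z = ∑' m, γ' m * uP m z at h1
      have hγs := summable_aux γ (lp_summable_abs γ) z hz
      have hγ2s := summable_aux γ' (lp_summable_abs γ') z hz
      have heq : ∑' m, (γ m - γ' m) * uP m z
          = (∑' m, γ m * uP m z) - ∑' m, γ' m * uP m z := by
        rw [← Summable.tsum_sub hγs hγ2s]
        congr 1; funext m; ring
      rw [heq, h1, sub_self]
    have hzero := kernel_zero _ hδ h0
    apply lp.ext
    funext n
    exact sub_eq_zero.mp (hzero n)
  · rw [linearIndependent_iff]
    intro l hl
    have hδ : Summable fun m => |l m| := by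
      apply summable_of_ne_finset_zero (s := l.support)
      intro m hm
      simp [Finsupp.notMem_support_iff.mp hm]
    have h0 : ∀ z ∈ unitDisk, ∑' m, l m * uP m z = 0 := by
      intro z hz
      have h1 := congrFun hl ⟨z, hz⟩
      simp only [Finsupp.linearCombination_apply, Finsupp.sum, Finset.sum_apply,
        Pi.smul_apply, Set.restrict_apply, smul_eq_mul, Pi.zero_apply] at h1
      have h2 : ∑' m, l m * uP m z = ∑ m ∈ l.support, l m * uP m z :=
        tsum_eq_sum (fun m hm => by simp [Finsupp.notMem_support_iff.mp hm])
      rw [h2]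
      exact h1
    have hzero := kernel_zero (fun n => l n) hδ h0
    ext n
    exact hzero n

end
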